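/- Let $T>0$, let $k:[0,\infty)\to\mathbb{R}$ be continuously differentiable, nonnegative and nonincreasing, let $C>0$, and let $v:[0,T]\to\mathbb{R}$ be continuous and nonnegative. Suppose that for every $t\in(0,T]$, $$\frac{d}{dt}\Bigl[\int_0^{t}k(t-s)\,v(s)\,ds\Bigr]+C\,v(t)\;\leq\;0$$ (the derivative exists since $k$ is continuously differentiable and $v$ is continuous). Then $v(t)=0$ for all $t\in[0,T]$. -/

import Mathlib

open Real MeasureTheory

open scoped Interval Topology

/-- Extend a `C¹` function on `[0,∞)` to a function on `ℝ` that is differentiable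
everywhere with continuous derivative, and agrees with the original on `[0,∞)`. -/
lemma extend_C1_aux {k : ℝ → ℝ} (hk1 : ContDiffOn ℝ 1 k (Set.Ici 0)) :
    ∃ K K' : ℝ → ℝ, Continuous K ∧ Continuous K' ∧ (∀ x, HasDerivAt K (K' x) x) ∧
      ∀ x ∈ Set.Ici (0:ℝ), K x = k x := by
  set d : ℝ → ℝ := derivWithin k (Set.Ici 0) with hd_def
  have hdc : ContinuousOn d (Set.Ici 0) :=
    hk1.continuousOn_derivWithin (uniqueDiffOn_Ici 0) le_rfl
  have hd : ∀ x ∈ Set.Ici (0:ℝ), HasDerivWithinAt k (d x) (Set.Ici 0) x := fun x hx =>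
    (hk1.differentiableOn one_ne_zero x hx).hasDerivWithinAt
  set K : ℝ → ℝ := fun x => if x < 0 then k 0 + d 0 * x else k x with hK_def
  set K' : ℝ → ℝ := fun x => d (max x 0) with hK'_def
  have hKk : ∀ x ∈ Set.Ici (0:ℝ), K x = k x := fun x hx => if_neg (not_lt.2 hx)
  have hK'c : Continuous K' :=
    hdc.comp_continuous (continuous_id.max continuous_const) fun x => le_max_right x 0
  have hL : ∀ x : ℝ, HasDerivAt (fun y => k 0 + d 0 * y) (d 0) x := by
    intro x
    simpa using ((hasDerivAt_id x).const_mul (d 0)).const_add (k 0)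
  have hKd : ∀ x, HasDerivAt K (K' x) x := by
    intro x
    rcases lt_trichotomy x 0 with hx | hx | hx
    · have hev : K =ᶠ[𝓝 x] fun y => k 0 + d 0 * y := by
        filter_upwards [isOpen_Iio.mem_nhds hx] with y hy
        simp only [hK_def]
        exact if_pos (Set.mem_Iio.1 hy)
      have hd0 : HasDerivAt K (d 0) x := (hL x).congr_of_eventuallyEq hev
      simpa [hK'_def, max_eq_right hx.le] using hd0
    · subst hx
      have h1 : HasDerivWithinAt K (d 0) (Set.Ici 0) 0 :=
        (hd 0 (Set.mem_Ici.2 le_rfl)).congr (fun y hy => hKk y hy) (hKk 0 (Set.mem_Ici.2 le_rfl))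
      have h2 : HasDerivWithinAt K (d 0) (Set.Iic 0) 0 := by
        refine ((hL 0).hasDerivWithinAt).congr ?_ ?_
        · intro y hy
          rcases lt_or_eq_of_le (Set.mem_Iic.1 hy) with h | h
          · simp only [hK_def]; rw [if_pos h]
          · subst h; simp only [hK_def]; rw [if_neg (lt_irrefl 0)]; ring
        · simp only [hK_def]; rw [if_neg (lt_irrefl 0)]; ring
      have h3 := h2.union h1
      rw [Set.Iic_union_Ici] at h3
      have h4 := hasDerivWithinAt_univ.1 h3
      simpa [hK'_def] using h4
    · have hev : K =ᶠ[𝓝 x] k := by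
        filter_upwards [isOpen_Ioi.mem_nhds hx] with y hy
        simp only [hK_def]
        exact if_neg (not_lt.2 (le_of_lt (Set.mem_Ioi.1 hy)))
      have hk_at : HasDerivAt k (d x) x :=
        (hd x hx.le).hasDerivAt (Filter.mem_of_superset (isOpen_Ioi.mem_nhds hx)
          Set.Ioi_subset_Ici_self)
      have hd0 : HasDerivAt K (d x) x := hk_at.congr_of_eventuallyEq hev
      simpa [hK'_def, max_eq_left hx.le] using hd0
  have hKc : Continuous K :=
    continuous_iff_continuousAt.2 fun x => (hKd x).differentiableAt.continuousAt
  exact ⟨K, K', hKc, hK'c, hKd, hKk⟩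

/-- Derivative of the Laplace convolution `t ↦ ∫_0^t K(t-s) w(s) ds` for a `C¹` kernel `K`
and continuous `w`, both defined on all of `ℝ`. -/
lemma conv_hasDerivAt {K K' w : ℝ → ℝ} (hKc : Continuous K) (hK'c : Continuous K')
    (hKd : ∀ x, HasDerivAt K (K' x) x) (hw : Continuous w) (t₀ : ℝ) :
    HasDerivAt (fun t => ∫ s in (0:ℝ)..t, K (t - s) * w s)
      (K 0 * w t₀ + ∫ s in (0:ℝ)..t₀, K' (t₀ - s) * w s) t₀ := by
  -- the "parameter" part: differentiate under the integral sign with fixed endpoints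
  have hφ : HasDerivAt (fun x => ∫ s in (0:ℝ)..t₀, K (x - s) * w s)
      (∫ s in (0:ℝ)..t₀, K' (t₀ - s) * w s) t₀ := by
    obtain ⟨M₁, hM₁⟩ := (isCompact_Icc (a := t₀ - 1 - |t₀|)
      (b := t₀ + 1 + |t₀|)).exists_bound_of_continuousOn hK'c.continuousOn
    obtain ⟨M₂, hM₂⟩ := (isCompact_Icc (a := -|t₀|)
      (b := |t₀|)).exists_bound_of_continuousOn hw.continuousOn
    have hM₁0 : 0 ≤ M₁ := le_trans (norm_nonneg _)
      (hM₁ t₀ ⟨by linarith [abs_nonneg t₀], by linarith [abs_nonneg t₀]⟩)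
    have hsmem : ∀ s ∈ Set.uIoc (0:ℝ) t₀, s ∈ Set.Icc (-|t₀|) |t₀| := by
      intro s hs
      rcases Set.mem_uIoc.1 hs with h | h
      · exact ⟨by linarith [abs_nonneg t₀, h.1], le_trans h.2 (le_abs_self t₀)⟩
      · exact ⟨by linarith [neg_abs_le t₀, h.1], le_trans h.2 (abs_nonneg t₀)⟩
    have key := intervalIntegral.hasDerivAt_integral_of_dominated_loc_of_deriv_le
      (F := fun x s => K (x - s) * w s) (F' := fun x s => K' (x - s) * w s)
      (x₀ := t₀) (a := (0:ℝ)) (b := t₀) (μ := volume) (bound := fun _ => M₁ * M₂)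
      (s := Metric.ball t₀ 1) (Metric.ball_mem_nhds t₀ one_pos)
      (Filter.Eventually.of_forall fun x =>
        (Continuous.aestronglyMeasurable (by fun_prop)))
      ((Continuous.intervalIntegrable (by fun_prop)) _ _)
      (Continuous.aestronglyMeasurable (by fun_prop))
      ?_ (intervalIntegrable_const) ?_
    · exact key.2
    · refine Filter.Eventually.of_forall fun s hs x hx => ?_
      have hs' := hsmem s hs
      have hx' : |x - t₀| < 1 := by
        have := mem_ball_iff_norm.1 hx
        simpa [Real.norm_eq_abs] using this
      have hxs : x - s ∈ Set.Icc (t₀ - 1 - |t₀|) (t₀ + 1 + |t₀|) := by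
        constructor
        · have := hs'.2; cases abs_lt.1 hx' with | intro h1 h2 => linarith
        · have := hs'.1; cases abs_lt.1 hx' with | intro h1 h2 => linarith
      have b1 : ‖K' (x - s)‖ ≤ M₁ := hM₁ _ hxs
      have b2 : ‖w s‖ ≤ M₂ := hM₂ _ hs'
      calc ‖K' (x - s) * w s‖ = ‖K' (x - s)‖ * ‖w s‖ := norm_mul _ _
        _ ≤ M₁ * M₂ := mul_le_mul b1 b2 (norm_nonneg _) hM₁0
    · refine Filter.Eventually.of_forall fun s _ x _ => ?_
      have h1 : HasDerivAt (fun y => K (y - s)) (K' (x - s)) x := by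
        have := (hKd (x - s)).comp x ((hasDerivAt_id x).sub_const s)
        rw [mul_one] at this; exact this
      exact h1.mul_const (w s)
  -- the FTC part
  have hW : HasDerivAt (fun t => ∫ s in (0:ℝ)..t, K 0 * w s) (K 0 * w t₀) t₀ :=
    ((continuous_const.mul hw).integral_hasStrictDerivAt 0 t₀).hasDerivAt
  -- the remainder part, with derivative zero
  have hR : HasDerivAt (fun t => ∫ s in t₀..t, (K (t - s) - K 0) * w s) 0 t₀ := by
    rw [hasDerivAt_iff_tendsto_slope]
    rw [Metric.tendsto_nhdsWithin_nhds]
    intro ε hε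
    obtain ⟨M, hM⟩ := (isCompact_Icc (a := t₀ - 1)
      (b := t₀ + 1)).exists_bound_of_continuousOn hw.continuousOn
    set M' : ℝ := max M 1 with hM'_def
    have hM'1 : (1:ℝ) ≤ M' := le_max_right _ _
    have hM'0 : (0:ℝ) < M' := lt_of_lt_of_le one_pos hM'1
    have hKcont : ContinuousAt K 0 := hKc.continuousAt
    have hεM : 0 < ε / (2 * M') := by positivity
    obtain ⟨δ₁, hδ₁, hKδ⟩ := Metric.continuousAt_iff.1 hKcont (ε / (2 * M')) hεM
    refine ⟨min δ₁ 1, lt_min hδ₁ one_pos, ?_⟩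
    intro t ht hdist
    have htne : t ≠ t₀ := ht
    rw [Real.dist_eq] at hdist
    have hd1 : |t - t₀| < δ₁ := lt_of_lt_of_le hdist (min_le_left _ _)
    have hd2 : |t - t₀| < 1 := lt_of_lt_of_le hdist (min_le_right _ _)
    have habs : ∀ s ∈ Set.uIoc t₀ t, |t - s| ≤ |t - t₀| ∧ |s - t₀| ≤ |t - t₀| := by
      intro s hs
      rcases Set.mem_uIoc.1 hs with h | h
      · rw [abs_of_nonneg (by linarith : (0:ℝ) ≤ t - s),
          abs_of_nonneg (by linarith : (0:ℝ) ≤ s - t₀),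
          abs_of_nonneg (by linarith : (0:ℝ) ≤ t - t₀)]
        constructor <;> linarith
      · rw [abs_of_nonpos (by linarith : t - s ≤ 0),
          abs_of_nonpos (by linarith : s - t₀ ≤ 0),
          abs_of_nonpos (by linarith : t - t₀ ≤ 0)]
        constructor <;> linarith
    have hbound : ∀ s ∈ Set.uIoc t₀ t,
        ‖(K (t - s) - K 0) * w s‖ ≤ ε / (2 * M') * M' := by
      intro s hs
      obtain ⟨h1, h2⟩ := habs s hs
      have hK1 : |K (t - s) - K 0| ≤ ε / (2 * M') := by
        have : dist (t - s) 0 < δ₁ := by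
          rw [Real.dist_eq, sub_zero]; exact lt_of_le_of_lt h1 hd1
        have := hKδ this
        rw [Real.dist_eq] at this
        exact this.le
      have hw1 : |w s| ≤ M' := by
        have hsIcc : s ∈ Set.Icc (t₀ - 1) (t₀ + 1) := by
          cases abs_le.1 (le_trans h2 hd2.le) with | intro ha hb =>
            exact ⟨by linarith, by linarith⟩
        exact le_trans (hM s hsIcc) (le_max_left _ _)
      calc ‖(K (t - s) - K 0) * w s‖ = |K (t - s) - K 0| * |w s| := by
            rw [norm_mul]; rfl
        _ ≤ ε / (2 * M') * M' := mul_le_mul hK1 hw1 (abs_nonneg _) hεM.le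
    have hRt : ‖∫ s in t₀..t, (K (t - s) - K 0) * w s‖ ≤ ε / (2 * M') * M' * |t - t₀| :=
      intervalIntegral.norm_integral_le_of_norm_le_const hbound
    have htpos : 0 < |t - t₀| := abs_pos.2 (sub_ne_zero.2 htne)
    rw [dist_zero_right, slope_def_field]
    rw [intervalIntegral.integral_same, sub_zero]
    rw [Real.norm_eq_abs, abs_div]
    have heq : ε / (2 * M') * M' = ε / 2 := by field_simp
    calc |(∫ s in t₀..t, (K (t - s) - K 0) * w s)| / |t - t₀|
        ≤ ε / (2 * M') * M' * |t - t₀| / |t - t₀| := by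
          apply div_le_div_of_nonneg_right ?_ htpos.le
          simpa [Real.norm_eq_abs] using hRt
      _ = ε / 2 := by rw [mul_div_assoc, div_self htpos.ne', mul_one, heq]
      _ < ε := by linarith
  -- the algebraic identity
  have key : ∀ t : ℝ, (∫ s in (0:ℝ)..t, K (t - s) * w s)
      = (∫ s in (0:ℝ)..t₀, K (t - s) * w s)
        + (((∫ s in (0:ℝ)..t, K 0 * w s) - ∫ s in (0:ℝ)..t₀, K 0 * w s)
          + ∫ s in t₀..t, (K (t - s) - K 0) * w s) := by
    intro t
    have i1 : IntervalIntegrable (fun s => K (t - s) * w s) volume 0 t₀ :=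
      (Continuous.intervalIntegrable (by fun_prop)) _ _
    have i2 : IntervalIntegrable (fun s => K (t - s) * w s) volume t₀ t :=
      (Continuous.intervalIntegrable (by fun_prop)) _ _
    have i3 : IntervalIntegrable (fun s => K 0 * w s) volume t₀ t :=
      (Continuous.intervalIntegrable (by fun_prop)) _ _
    have i4 : IntervalIntegrable (fun s => (K (t - s) - K 0) * w s) volume t₀ t :=
      (Continuous.intervalIntegrable (by fun_prop)) _ _
    have e1 : (∫ s in (0:ℝ)..t, K 0 * w s) - ∫ s in (0:ℝ)..t₀, K 0 * w s
        = ∫ s in t₀..t, K 0 * w s :=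
      intervalIntegral.integral_interval_sub_left
        ((Continuous.intervalIntegrable (by fun_prop)) _ _)
        ((Continuous.intervalIntegrable (by fun_prop)) _ _)
    have e2 : (∫ s in t₀..t, K 0 * w s) + ∫ s in t₀..t, (K (t - s) - K 0) * w s
        = ∫ s in t₀..t, K (t - s) * w s := by
      rw [← intervalIntegral.integral_add i3 i4]
      apply intervalIntegral.integral_congr
      intro s _
      ring
    rw [e1, e2, intervalIntegral.integral_add_adjacent_intervals i1 i2]
  -- combine
  have hsum := hφ.add ((hW.sub_const (∫ s in (0:ℝ)..t₀, K 0 * w s)).add hR)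
  have hfinal : HasDerivAt (fun t => ∫ s in (0:ℝ)..t, K (t - s) * w s)
      ((∫ s in (0:ℝ)..t₀, K' (t₀ - s) * w s) + (K 0 * w t₀ + 0)) t₀ :=
    hsum.congr_of_eventuallyEq (Filter.Eventually.of_forall fun t => key t)
  convert hfinal using 1
  ring

/-- Vanishing lemma: a continuous nonnegative `v` satisfying
`∂ₜ(k ∗ v)(t) + C v(t) ≤ 0` on `(0,T]` for a nonnegative, nonincreasing, continuously
differentiable kernel `k` must vanish identically on `[0,T]`. -/
theorem comparison_vanishing (T : ℝ) (hT : 0 < T)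
    (k : ℝ → ℝ)
    (hk1 : ContDiffOn ℝ 1 k (Set.Ici 0))
    (hknn : ∀ s ∈ Set.Ici (0:ℝ), 0 ≤ k s)
    (hkmono : AntitoneOn k (Set.Ici 0))
    (C : ℝ) (hC : 0 < C)
    (v : ℝ → ℝ)
    (hv_cont : ContinuousOn v (Set.Icc 0 T))
    (hv_nn : ∀ t ∈ Set.Icc (0:ℝ) T, 0 ≤ v t)
    (hineq : ∀ t ∈ Set.Ioc (0:ℝ) T,
      deriv (fun τ => ∫ s in (0:ℝ)..τ, k (τ - s) * v s) t + C * v t ≤ 0) :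
    ∀ t ∈ Set.Icc (0:ℝ) T, v t = 0 := by
  obtain ⟨K, K', hKc, hK'c, hKd, hKk⟩ := extend_C1_aux hk1
  -- the clamped extension of `v`
  set w : ℝ → ℝ := fun s => v (max 0 (min s T)) with hw_def
  have hclamp : ∀ s : ℝ, max 0 (min s T) ∈ Set.Icc (0:ℝ) T := fun s =>
    ⟨le_max_left _ _, max_le hT.le (min_le_right s T)⟩
  have hw_cont : Continuous w :=
    hv_cont.comp_continuous (by fun_prop) hclamp
  have hw_eq : ∀ s ∈ Set.Icc (0:ℝ) T, w s = v s := by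
    intro s hs
    simp only [hw_def]
    rw [min_eq_left hs.2, max_eq_right hs.1]
  -- the globally-defined convolution
  set G : ℝ → ℝ := fun t => ∫ s in (0:ℝ)..t, K (t - s) * w s with hG_def
  have hGF : ∀ τ ∈ Set.Icc (0:ℝ) T,
      (∫ s in (0:ℝ)..τ, k (τ - s) * v s) = G τ := by
    intro τ hτ
    apply intervalIntegral.integral_congr
    intro s hs
    rw [Set.uIcc_of_le hτ.1] at hs
    show k (τ - s) * v s = K (τ - s) * w s
    have h1 : τ - s ∈ Set.Ici (0:ℝ) := sub_nonneg.2 hs.2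
    have h2 : s ∈ Set.Icc (0:ℝ) T := ⟨hs.1, le_trans hs.2 hτ.2⟩
    rw [hKk _ h1, hw_eq _ h2]
  have hGd : ∀ t, HasDerivAt G (K 0 * w t + ∫ s in (0:ℝ)..t, K' (t - s) * w s) t :=
    fun t => conv_hasDerivAt hKc hK'c hKd hw_cont t
  -- transfer the differential inequality to `G`
  have hderiv_eq : ∀ t ∈ Set.Ioo (0:ℝ) T,
      deriv (fun τ => ∫ s in (0:ℝ)..τ, k (τ - s) * v s) t = deriv G t := by
    intro t ht
    apply Filter.EventuallyEq.deriv_eq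
    filter_upwards [isOpen_Ioo.mem_nhds ht] with τ hτ
    exact hGF τ ⟨hτ.1.le, hτ.2.le⟩
  have hGderiv_le : ∀ t ∈ Set.Ioo (0:ℝ) T, deriv G t ≤ 0 := by
    intro t ht
    have h1 := hineq t ⟨ht.1, ht.2.le⟩
    have h2 : 0 ≤ C * v t := mul_nonneg hC.le (hv_nn t ⟨ht.1.le, ht.2.le⟩)
    rw [hderiv_eq t ht] at h1
    linarith
  -- `G` is antitone on `[0,T]`
  have hanti : AntitoneOn G (Set.Icc 0 T) := by
    apply antitoneOn_of_deriv_nonpos (convex_Icc 0 T)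
    · exact (continuous_iff_continuousAt.2 fun t =>
        (hGd t).differentiableAt.continuousAt).continuousOn
    · intro t ht
      exact (hGd t).differentiableAt.differentiableWithinAt
    · intro t ht
      rw [interior_Icc] at ht
      exact hGderiv_le t ht
  have hG0 : G 0 = 0 := intervalIntegral.integral_same
  have hGnn : ∀ t ∈ Set.Icc (0:ℝ) T, 0 ≤ G t := by
    intro t ht
    rw [← hGF t ht]
    apply intervalIntegral.integral_nonneg ht.1
    intro s hs
    exact mul_nonneg (hknn _ (sub_nonneg.2 hs.2)) (hv_nn s ⟨hs.1, le_trans hs.2 ht.2⟩)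
  have hGzero : ∀ t ∈ Set.Icc (0:ℝ) T, G t = 0 := by
    intro t ht
    refine le_antisymm ?_ (hGnn t ht)
    have := hanti (Set.left_mem_Icc.2 hT.le) ht ht.1
    rw [hG0] at this
    exact this
  -- deduce `v = 0` on the open interval
  have hvIoo : ∀ t ∈ Set.Ioo (0:ℝ) T, v t = 0 := by
    intro t ht
    have hder0 : deriv G t = 0 := by
      have hev : G =ᶠ[𝓝 t] fun _ => (0:ℝ) := by
        filter_upwards [isOpen_Ioo.mem_nhds ht] with τ hτ
        exact hGzero τ ⟨hτ.1.le, hτ.2.le⟩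
      rw [hev.deriv_eq, deriv_const]
    have h1 := hineq t ⟨ht.1, ht.2.le⟩
    rw [hderiv_eq t ht, hder0] at h1
    have h2 : 0 ≤ C * v t := mul_nonneg hC.le (hv_nn t ⟨ht.1.le, ht.2.le⟩)
    have h3 : C * v t = 0 := le_antisymm (by linarith) h2
    rcases mul_eq_zero.1 h3 with h | h
    · exact absurd h hC.ne'
    · exact h
  -- endpoints by continuity
  have hIoo_sub : Set.Ioo (0:ℝ) T ⊆ Set.Icc 0 T := Set.Ioo_subset_Icc_self
  have hend : ∀ x ∈ Set.Icc (0:ℝ) T, x ∈ closure (Set.Ioo (0:ℝ) T) → v x = 0 := by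
    intro x hx hxc
    have hnb : (𝓝[Set.Ioo (0:ℝ) T] x).NeBot := mem_closure_iff_nhdsWithin_neBot.1 hxc
    have h1 : Filter.Tendsto v (𝓝[Set.Ioo (0:ℝ) T] x) (𝓝 (v x)) :=
      ((hv_cont x hx).mono hIoo_sub).tendsto
    have h2 : Filter.Tendsto v (𝓝[Set.Ioo (0:ℝ) T] x) (𝓝 0) := by
      apply Filter.Tendsto.congr' _ tendsto_const_nhds
      filter_upwards [self_mem_nhdsWithin] with τ hτ
      exact (hvIoo τ hτ).symm
    exact tendsto_nhds_unique h1 h2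
  intro t ht
  rcases eq_or_lt_of_le ht.1 with h0 | h0
  · refine hend t ht ?_
    rw [closure_Ioo hT.ne, ← h0]
    exact Set.left_mem_Icc.2 hT.le
  rcases eq_or_lt_of_le ht.2 with hTeq | hTlt
  · refine hend t ht ?_
    rw [closure_Ioo hT.ne, hTeq]
    exact Set.right_mem_Icc.2 hT.le
  · exact hvIoo t ⟨h0, hTlt⟩
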